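/- Every univariate real polynomial of even degree 2n that is nonnegative on [α, β] (with α < β) can be written as s(x) + (x - α)(β - x) t(x) where s is a sum of squares of polynomials of degree at most n and t is a sum of squares of polynomials of degree at most n - 1. -/

import Mathlib

open Polynomial Set Filter

/-- A univariate real polynomial is a sum of squares of polynomials of degree at most `d`. -/
def IsSumOfSquaresOfDeg (d : ℕ) (p : Polynomial ℝ) : Prop :=
  ∃ (m : ℕ) (h : Fin m → Polynomial ℝ),
    (∀ i, (h i).natDegree ≤ d) ∧ p = ∑ i, (h i) ^ 2

namespace ML


lemma sos_zero (d : ℕ) : IsSumOfSquaresOfDeg d 0 :=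
  ⟨0, fun i => i.elim0, fun i => i.elim0, by simp⟩

lemma sos_one (d : ℕ) : IsSumOfSquaresOfDeg d 1 :=
  ⟨1, fun _ => 1, fun _ => by simp, by simp⟩

lemma sos_add {d : ℕ} {p q : Polynomial ℝ} (hp : IsSumOfSquaresOfDeg d p)
    (hq : IsSumOfSquaresOfDeg d q) : IsSumOfSquaresOfDeg d (p + q) := by
  obtain ⟨m, h, hd, rfl⟩ := hp
  obtain ⟨m', h', hd', rfl⟩ := hq
  refine ⟨m + m', Fin.append h h', ?_, ?_⟩
  · intro i
    refine Fin.addCases (fun j => ?_) (fun j => ?_) i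
    · simpa using hd j
    · simpa using hd' j
  · rw [Fin.sum_univ_add]
    simp

lemma sos_mono {d e : ℕ} {p : Polynomial ℝ} (hde : d ≤ e) (hp : IsSumOfSquaresOfDeg d p) :
    IsSumOfSquaresOfDeg e p := by
  obtain ⟨m, h, hd, rfl⟩ := hp
  exact ⟨m, h, fun i => (hd i).trans hde, rfl⟩

lemma sos_mul_sq {d e : ℕ} {p : Polynomial ℝ} (hp : IsSumOfSquaresOfDeg d p)
    (f : Polynomial ℝ) (hf : f.natDegree ≤ e) :
    IsSumOfSquaresOfDeg (e + d) (f ^ 2 * p) := by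
  obtain ⟨m, h, hd, rfl⟩ := hp
  refine ⟨m, fun i => f * h i, fun i => natDegree_mul_le.trans (add_le_add hf (hd i)), ?_⟩
  rw [Finset.mul_sum]
  simp [mul_pow]

lemma sos_const {d : ℕ} {c : ℝ} (hc : 0 ≤ c) : IsSumOfSquaresOfDeg d (C c) :=
  ⟨1, fun _ => C (Real.sqrt c), fun _ => by simp,
    by simp [← C_pow, Real.sq_sqrt hc]⟩

lemma sos_smul {d : ℕ} {c : ℝ} {p : Polynomial ℝ} (hc : 0 ≤ c)
    (hp : IsSumOfSquaresOfDeg d p) : IsSumOfSquaresOfDeg d (C c * p) := by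
  have h := sos_mul_sq (e := 0) hp (C (Real.sqrt c)) (by simp)
  rwa [← C_pow, Real.sq_sqrt hc, zero_add] at h

lemma sos_quad_mul {d : ℕ} {p : Polynomial ℝ} (a b : ℝ) (hp : IsSumOfSquaresOfDeg d p) :
    IsSumOfSquaresOfDeg (d + 1) (((X - C a) ^ 2 + C (b ^ 2)) * p) := by
  have h1 := sos_mul_sq (e := 1) hp (X - C a) (natDegree_X_sub_C a).le
  have h2 := sos_mul_sq (e := 0) hp (C b) (by simp)
  rw [← C_pow] at h2
  rw [add_mul]
  exact sos_add (sos_mono (by omega) h1) (sos_mono (by omega) h2)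



/-- even-form membership in the quadratic module, with degree bounds. -/
def InE (α β : ℝ) (m : ℕ) (p : Polynomial ℝ) : Prop :=
  ∃ s t, IsSumOfSquaresOfDeg m s ∧ IsSumOfSquaresOfDeg (m - 1) t ∧ (m = 0 → t = 0) ∧
    p = s + (X - C α) * (C β - X) * t

/-- odd-form membership. -/
def InO (α β : ℝ) (m : ℕ) (p : Polynomial ℝ) : Prop :=
  ∃ s t, IsSumOfSquaresOfDeg m s ∧ IsSumOfSquaresOfDeg m t ∧
    p = (X - C α) * s + (C β - X) * t


lemma nd_bX (β : ℝ) : (C β - X : Polynomial ℝ).natDegree ≤ 1 := by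
  have h : (C β - X : Polynomial ℝ) = -(X - C β) := by ring
  rw [h, natDegree_neg, natDegree_X_sub_C]

lemma sos_mul_sq1 {m : ℕ} {p f : Polynomial ℝ} (hf : f.natDegree ≤ 1)
    (hp : IsSumOfSquaresOfDeg m p) : IsSumOfSquaresOfDeg (m + 1) (f ^ 2 * p) :=
  sos_mono (by omega) (sos_mul_sq (e := 1) hp f hf)

variable {α β : ℝ} {m : ℕ} {p q : Polynomial ℝ}

lemma InE.add (hp : InE α β m p) (hq : InE α β m q) : InE α β m (p + q) := by
  obtain ⟨s, t, hs, ht, h0, rfl⟩ := hp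
  obtain ⟨s', t', hs', ht', h0', rfl⟩ := hq
  exact ⟨s + s', t + t', sos_add hs hs', sos_add ht ht',
    fun h => by rw [h0 h, h0' h, add_zero], by ring⟩

lemma InO.add (hp : InO α β m p) (hq : InO α β m q) : InO α β m (p + q) := by
  obtain ⟨s, t, hs, ht, rfl⟩ := hp
  obtain ⟨s', t', hs', ht', rfl⟩ := hq
  exact ⟨s + s', t + t', sos_add hs hs', sos_add ht ht', by ring⟩

lemma InE.zero : InE α β m 0 := ⟨0, 0, sos_zero m, sos_zero _, fun _ => rfl, by simp⟩

lemma InO.zero : InO α β m 0 := ⟨0, 0, sos_zero m, sos_zero m, by simp⟩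

lemma InE.smul {c : ℝ} (hc : 0 ≤ c) (hp : InE α β m p) : InE α β m (C c * p) := by
  obtain ⟨s, t, hs, ht, h0, rfl⟩ := hp
  exact ⟨C c * s, C c * t, sos_smul hc hs, sos_smul hc ht,
    fun h => by rw [h0 h, mul_zero], by ring⟩

lemma InO.smul {c : ℝ} (hc : 0 ≤ c) (hp : InO α β m p) : InO α β m (C c * p) := by
  obtain ⟨s, t, hs, ht, rfl⟩ := hp
  exact ⟨C c * s, C c * t, sos_smul hc hs, sos_smul hc ht, by ring⟩

lemma key_c (hαβ : α < β) : (C ((β - α)⁻¹) : Polynomial ℝ) * (C β - C α) = 1 := by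
  rw [← C_sub, ← C_mul, inv_mul_cancel₀ (sub_ne_zero.2 hαβ.ne'), C_1]

lemma InE.conv_EO (hαβ : α < β) (hp : InE α β m p) : InO α β m p := by
  obtain ⟨s, t, hs, ht, h0, rfl⟩ := hp
  have hk : (0:ℝ) ≤ (β - α)⁻¹ := le_of_lt (inv_pos.2 (sub_pos.2 hαβ))
  have hc := key_c hαβ
  rcases Nat.eq_zero_or_pos m with hm | hm
  · rw [h0 hm, mul_zero, add_zero]
    exact ⟨C ((β - α)⁻¹) * s, C ((β - α)⁻¹) * s, sos_smul hk hs, sos_smul hk hs,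
      by linear_combination (-s) * hc⟩
  · refine ⟨C ((β - α)⁻¹) * (s + (C β - X) ^ 2 * t), C ((β - α)⁻¹) * (s + (X - C α) ^ 2 * t),
      sos_smul hk (sos_add hs ?_), sos_smul hk (sos_add hs ?_),
      by linear_combination (-(s + (X - C α) * (C β - X) * t)) * hc⟩
    · exact sos_mono (by omega) (sos_mul_sq1 (nd_bX β) ht)
    · exact sos_mono (by omega) (sos_mul_sq1 (natDegree_X_sub_C α).le ht)

lemma InO.conv_OE (hαβ : α < β) (hp : InO α β m p) : InE α β (m + 1) p := by
  obtain ⟨s, t, hs, ht, rfl⟩ := hp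
  have hk : (0:ℝ) ≤ (β - α)⁻¹ := le_of_lt (inv_pos.2 (sub_pos.2 hαβ))
  have hc := key_c hαβ
  refine ⟨C ((β - α)⁻¹) * ((X - C α) ^ 2 * s + (C β - X) ^ 2 * t),
    C ((β - α)⁻¹) * (s + t),
    sos_smul hk (sos_add (sos_mul_sq1 (natDegree_X_sub_C α).le hs)
      (sos_mul_sq1 (nd_bX β) ht)),
    sos_smul hk (by simpa using sos_add hs ht),
    fun h => absurd h (Nat.succ_ne_zero m),
    by linear_combination (-((X - C α) * s + (C β - X) * t)) * hc⟩

lemma InE.mulXα (hp : InE α β m p) : InO α β m ((X - C α) * p) := by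
  obtain ⟨s, t, hs, ht, h0, rfl⟩ := hp
  rcases Nat.eq_zero_or_pos m with hm | hm
  · rw [h0 hm, mul_zero, add_zero]
    exact ⟨s, 0, hs, sos_zero m, by ring⟩
  · refine ⟨s, (X - C α) ^ 2 * t, hs, ?_, by ring⟩
    exact sos_mono (by omega) (sos_mul_sq1 (natDegree_X_sub_C α).le ht)

lemma InE.mulβX (hp : InE α β m p) : InO α β m ((C β - X) * p) := by
  obtain ⟨s, t, hs, ht, h0, rfl⟩ := hp
  rcases Nat.eq_zero_or_pos m with hm | hm
  · rw [h0 hm, mul_zero, add_zero]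
    exact ⟨0, s, sos_zero m, hs, by ring⟩
  · refine ⟨(C β - X) ^ 2 * t, s, ?_, hs, by ring⟩
    exact sos_mono (by omega) (sos_mul_sq1 (nd_bX β) ht)

lemma InO.mulXα (hp : InO α β m p) : InE α β (m + 1) ((X - C α) * p) := by
  obtain ⟨s, t, hs, ht, rfl⟩ := hp
  exact ⟨(X - C α) ^ 2 * s, t, sos_mul_sq1 (natDegree_X_sub_C α).le hs,
    by simpa using ht, fun h => absurd h (Nat.succ_ne_zero m), by ring⟩

lemma InO.mulβX (hp : InO α β m p) : InE α β (m + 1) ((C β - X) * p) := by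
  obtain ⟨s, t, hs, ht, rfl⟩ := hp
  exact ⟨(C β - X) ^ 2 * t,
    s, sos_mul_sq1 (nd_bX β) ht,
    by simpa using hs, fun h => absurd h (Nat.succ_ne_zero m), by ring⟩

lemma InE.sq_mul {f : Polynomial ℝ} (hf : f.natDegree ≤ 1) (hp : InE α β m p) :
    InE α β (m + 1) (f ^ 2 * p) := by
  obtain ⟨s, t, hs, ht, h0, rfl⟩ := hp
  refine ⟨f ^ 2 * s, f ^ 2 * t, sos_mul_sq1 hf hs, ?_,
    fun h => absurd h (Nat.succ_ne_zero m), by ring⟩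
  rcases Nat.eq_zero_or_pos m with hm | hm
  · rw [h0 hm, mul_zero]; exact sos_zero _
  · exact sos_mono (by omega) (sos_mul_sq1 hf ht)

lemma InO.sq_mul {f : Polynomial ℝ} (hf : f.natDegree ≤ 1) (hp : InO α β m p) :
    InO α β (m + 1) (f ^ 2 * p) := by
  obtain ⟨s, t, hs, ht, rfl⟩ := hp
  exact ⟨f ^ 2 * s, f ^ 2 * t, sos_mul_sq1 hf hs, sos_mul_sq1 hf ht, by ring⟩

lemma InE.quad_mul {a b : ℝ} (hp : InE α β m p) :
    InE α β (m + 1) (((X - C a) ^ 2 + C (b ^ 2)) * p) := by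
  obtain ⟨s, t, hs, ht, h0, rfl⟩ := hp
  refine ⟨((X - C a) ^ 2 + C (b ^ 2)) * s, ((X - C a) ^ 2 + C (b ^ 2)) * t,
    sos_quad_mul a b hs, ?_, fun h => absurd h (Nat.succ_ne_zero m), by ring⟩
  rcases Nat.eq_zero_or_pos m with hm | hm
  · rw [h0 hm, mul_zero]; exact sos_zero _
  · exact sos_mono (by omega) (sos_quad_mul a b ht)



/-- Nonnegativity extends to a missing point by continuity. -/
lemma ext_nonneg {α β r : ℝ} {q : Polynomial ℝ} (hαβ : α < β) (hr : r ∈ Icc α β)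
    (h : ∀ x ∈ Icc α β, x ≠ r → 0 ≤ q.eval x) : 0 ≤ q.eval r := by
  rcases lt_or_eq_of_le hr.2 with hrβ | hrβ
  · have ht : Tendsto (fun x => q.eval x) (nhdsWithin r (Ioi r)) (nhds (q.eval r)) :=
      (q.continuous.continuousAt).tendsto.mono_left nhdsWithin_le_nhds
    refine ge_of_tendsto ht ?_
    filter_upwards [Ioo_mem_nhdsGT_of_mem ⟨le_refl r, hrβ⟩] with x hx
    exact h x ⟨le_trans hr.1 hx.1.le, hx.2.le⟩ (ne_of_gt hx.1)
  · have hαr : α < r := hrβ ▸ hαβ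
    have ht : Tendsto (fun x => q.eval x) (nhdsWithin r (Iio r)) (nhds (q.eval r)) :=
      (q.continuous.continuousAt).tendsto.mono_left nhdsWithin_le_nhds
    refine ge_of_tendsto ht ?_
    filter_upwards [Ioo_mem_nhdsLT_of_mem ⟨hαr, le_refl r⟩] with x hx
    exact h x ⟨hx.1.le, hx.2.le.trans hr.2⟩ (ne_of_lt hx.2)

/-- A real polynomial of odd degree has a real root. -/
lemma odd_root {p : Polynomial ℝ} (hodd : Odd p.natDegree) : ∃ r, p.IsRoot r := by
  -- reduce to the case of nonnegative leading coefficient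
  suffices H : ∀ q : Polynomial ℝ, Odd q.natDegree → 0 ≤ q.leadingCoeff → ∃ r, q.IsRoot r by
    rcases le_or_gt 0 p.leadingCoeff with hlc | hlc
    · exact H p hodd hlc
    · obtain ⟨r, hr⟩ := H (-p) (by simpa using hodd) (by simp [leadingCoeff_neg]; exact hlc.le)
      exact ⟨r, by simpa [IsRoot] using hr⟩
  intro q hodd hlc
  have hdeg : 0 < q.degree := natDegree_pos_iff_degree_pos.1 hodd.pos
  have h1 : Tendsto (fun x => q.eval x) atTop atTop :=
    q.tendsto_atTop_of_leadingCoeff_nonneg hdeg hlc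
  set q' : Polynomial ℝ := q.comp (-X) with hq'
  have hndX : (-X : Polynomial ℝ).natDegree = 1 := by simp
  have hnd' : q'.natDegree = q.natDegree := by
    rw [hq', natDegree_comp, hndX, mul_one]
  have hdeg' : 0 < q'.degree := by
    rw [natDegree_pos_iff_degree_pos.symm, hnd']; exact hodd.pos
  have hlc' : q'.leadingCoeff ≤ 0 := by
    rw [hq', leadingCoeff_comp (by rw [hndX]; omega)]
    simp only [leadingCoeff_neg, leadingCoeff_X]
    rw [hodd.neg_one_pow]
    simpa using hlc
  have h2 : Tendsto (fun x => q'.eval x) atTop atBot :=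
    q'.tendsto_atBot_of_leadingCoeff_nonpos hdeg' hlc'
  obtain ⟨a, ha⟩ := (h1.eventually_ge_atTop 1).exists
  obtain ⟨b, hb⟩ := (h2.eventually_le_atBot (-1)).exists
  have hb' : q.eval (-b) ≤ -1 := by
    rwa [hq', eval_comp, eval_neg, eval_X] at hb
  have hc : (0:ℝ) ∈ uIcc (q.eval (-b)) (q.eval a) := by
    rw [Set.mem_uIcc]; left; constructor <;> linarith
  have := intermediate_value_uIcc (a := -b) (b := a) (q.continuous.continuousOn)
  obtain ⟨r, _, hr⟩ := this (mem_of_mem_of_subset hc (by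
    apply uIcc_subset_uIcc <;> simp [left_mem_uIcc, right_mem_uIcc]))
  exact ⟨r, hr⟩

/-- An interior root of a polynomial that is nonnegative on `[α, β]` is (at least) double. -/
lemma double_root {α β r : ℝ} {p : Polynomial ℝ} (hr : r ∈ Ioo α β)
    (hnn : ∀ x ∈ Icc α β, 0 ≤ p.eval x) (hr0 : p.eval r = 0) :
    ∃ q, p = (X - C r) ^ 2 * q := by
  have hmin : IsLocalMin (fun x => p.eval x) r := by
    filter_upwards [Ioo_mem_nhds hr.1 hr.2] with x hx
    rw [hr0]
    exact hnn x ⟨hx.1.le, hx.2.le⟩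
  have hderiv : p.derivative.eval r = 0 := by
    have := hmin.deriv_eq_zero
    rwa [Polynomial.deriv] at this
  obtain ⟨q, hq⟩ : (X - C r) ∣ p := dvd_iff_isRoot.2 hr0
  have hqr : q.eval r = 0 := by
    have hd : p.derivative = q + (X - C r) * q.derivative := by
      rw [hq, derivative_mul, derivative_sub, derivative_X, derivative_C, sub_zero, one_mul]
    have := hderiv
    rw [hd] at this
    simpa using this
  obtain ⟨q', hq'⟩ : (X - C r) ∣ q := dvd_iff_isRoot.2 hqr
  exact ⟨q', by rw [hq, hq']; ring⟩

/-- A real polynomial of positive degree with no real root has a positive-definite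
quadratic factor. -/
lemma quad_factor {p : Polynomial ℝ} (hdeg : 0 < p.natDegree) (hroot : ∀ r : ℝ, ¬p.IsRoot r) :
    ∃ a b q, b ≠ 0 ∧ p = ((X - C a) ^ 2 + C (b ^ 2)) * q := by
  have hp0 : p ≠ 0 := fun h => by simp [h] at hdeg
  have hdegC : 0 < (p.map (algebraMap ℝ ℂ)).degree := by
    rw [degree_map_eq_of_injective (algebraMap ℝ ℂ).injective]
    exact natDegree_pos_iff_degree_pos.1 hdeg
  obtain ⟨z, hz⟩ := Complex.exists_root hdegC
  have haz : Polynomial.aeval z p = 0 := by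
    rw [aeval_def, ← eval_map]; exact hz
  have him : z.im ≠ 0 := by
    intro h0
    have hzre : (z.re : ℂ) = z := by
      exact Complex.ext rfl (by simp [h0])
    apply hroot z.re
    have h2 : Polynomial.aeval (z.re : ℂ) p = 0 := by rw [hzre]; exact haz
    erw [aeval_ofReal, RCLike.ofReal_eq_zero] at h2
    exact h2
  obtain ⟨q, hq⟩ := p.quadratic_dvd_of_aeval_eq_zero_im_ne_zero haz him
  refine ⟨z.re, z.im, q, him, ?_⟩
  rw [hq]
  congr 1
  have hnorm : ‖z‖ ^ 2 = z.re ^ 2 + z.im ^ 2 := by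
    rw [Complex.sq_norm, Complex.normSq_apply]; ring
  have h2 : (C (2:ℝ) : Polynomial ℝ) = 2 := by rw [show (2:ℝ) = (1:ℝ) + 1 by norm_num, C_add, C_1]; norm_num
  rw [hnorm, C_add, C_pow, C_pow, C_mul, h2]; ring



-- now the real work
def EP (α β : ℝ) (m : ℕ) : Prop :=
  ∀ p : Polynomial ℝ, p.natDegree ≤ 2 * m → (∀ x ∈ Icc α β, 0 < p.eval x) → InE α β m p
def OP (α β : ℝ) (m : ℕ) : Prop :=
  ∀ p : Polynomial ℝ, p.natDegree ≤ 2 * m + 1 → (∀ x ∈ Icc α β, 0 < p.eval x) → InO α β m p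
def EN (α β : ℝ) (m : ℕ) : Prop :=
  ∀ p : Polynomial ℝ, p.natDegree ≤ 2 * m → (∀ x ∈ Icc α β, 0 ≤ p.eval x) → InE α β m p
def ON (α β : ℝ) (m : ℕ) : Prop :=
  ∀ p : Polynomial ℝ, p.natDegree ≤ 2 * m + 1 → (∀ x ∈ Icc α β, 0 ≤ p.eval x) → InO α β m p

variable {α β : ℝ}

lemma root_out {r : ℝ} {p : Polynomial ℝ} (hpos : ∀ x ∈ Icc α β, 0 < p.eval x)
    (hr : p.IsRoot r) : r < α ∨ β < r := by
  by_contra h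
  push_neg at h
  exact (hpos r ⟨h.1, h.2⟩).ne' hr

lemma deg_of_linfac {r : ℝ} {p q : Polynomial ℝ} (hp0 : p ≠ 0) (hq : p = (X - C r) * q) :
    p.natDegree = 1 + q.natDegree ∧ q ≠ 0 := by
  have hq0 : q ≠ 0 := by
    intro h
    rw [h, mul_zero] at hq
    exact hp0 hq
  rw [hq, natDegree_mul (X_sub_C_ne_zero r) hq0, natDegree_X_sub_C]
  exact ⟨rfl, hq0⟩

lemma EP_all (hαβ : α < β) (m : ℕ) (ih : ∀ k, k + 1 = m → EP α β k ∧ OP α β k) :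
    EP α β m := by
  intro p hdeg hpos
  rcases Nat.eq_zero_or_pos m with hm | hm
  · subst hm
    have hc := p.eq_C_of_natDegree_le_zero (by omega)
    have h0 := hpos α ⟨le_rfl, hαβ.le⟩
    rw [hc, eval_C] at h0
    exact ⟨p, 0, by rw [hc]; exact sos_const h0.le, sos_zero _, fun _ => rfl, by simp⟩
  obtain ⟨k, rfl⟩ : ∃ k, m = k + 1 := ⟨m - 1, by omega⟩
  obtain ⟨ihEP, ihOP⟩ := ih k rfl
  by_cases hd : p.natDegree ≤ 2 * k + 1
  · exact (ihOP p hd hpos).conv_OE hαβ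
  have hdeg' : p.natDegree = 2 * k + 2 := by omega
  have hp0 : p ≠ 0 := by
    intro h
    rw [h, natDegree_zero] at hdeg'
    omega
  by_cases hroot : ∃ r : ℝ, p.IsRoot r
  · obtain ⟨r, hr⟩ := hroot
    obtain ⟨q, hq⟩ : (X - C r) ∣ p := dvd_iff_isRoot.2 hr
    obtain ⟨hdq, hq0⟩ := deg_of_linfac hp0 hq
    rcases root_out hpos hr with hrα | hrβ
    · have hqpos : ∀ x ∈ Icc α β, 0 < q.eval x := by
        intro x hx
        have h1 := hpos x hx
        rw [hq, eval_mul, eval_sub, eval_X, eval_C] at h1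
        have h2 : 0 < x - r := by linarith [hx.1]
        nlinarith
      have hO : InO α β k q := ihOP q (by omega) hqpos
      have hsplit : p = (X - C α) * q + C (α - r) * q := by rw [hq, C_sub]; ring
      rw [hsplit]
      exact (hO.mulXα).add ((hO.smul (by linarith)).conv_OE hαβ)
    · have hqpos : ∀ x ∈ Icc α β, 0 < (-q).eval x := by
        intro x hx
        have h1 := hpos x hx
        rw [hq, eval_mul, eval_sub, eval_X, eval_C] at h1
        rw [eval_neg]
        have h2 : x - r < 0 := by linarith [hx.2]
        nlinarith
      have hO : InO α β k (-q) := ihOP (-q) (by rw [natDegree_neg]; omega) hqpos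
      have hsplit : p = (C β - X) * (-q) + C (r - β) * (-q) := by rw [hq, C_sub]; ring
      rw [hsplit]
      exact (hO.mulβX).add ((hO.smul (by linarith)).conv_OE hαβ)
  · push_neg at hroot
    obtain ⟨a, b, q, hb, hfac⟩ := quad_factor (by omega) hroot
    have hq20 : ((X - C a) ^ 2 + C (b ^ 2) : Polynomial ℝ).natDegree = 2 := by
      compute_degree!
    have hq0 : q ≠ 0 := by
      intro h
      rw [h, mul_zero] at hfac
      exact hp0 hfac
    have hq2ne : ((X - C a) ^ 2 + C (b ^ 2) : Polynomial ℝ) ≠ 0 := by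
      intro h
      rw [h, natDegree_zero] at hq20
      omega
    have hdq : p.natDegree = 2 + q.natDegree := by
      rw [hfac, natDegree_mul hq2ne hq0, hq20]
    have hq2pos : ∀ x : ℝ, 0 < ((X - C a) ^ 2 + C (b ^ 2) : Polynomial ℝ).eval x := by
      intro x
      simp only [eval_add, eval_pow, eval_sub, eval_X, eval_C]
      positivity
    have hqpos : ∀ x ∈ Icc α β, 0 < q.eval x := by
      intro x hx
      have h1 := hpos x hx
      rw [hfac, eval_mul] at h1
      nlinarith [hq2pos x]
    have hE : InE α β k q := ihEP q (by omega) hqpos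
    rw [hfac]
    exact hE.quad_mul

lemma OP_of (hαβ : α < β) (m : ℕ) (hEP : EP α β m) : OP α β m := by
  intro p hdeg hpos
  by_cases hd : p.natDegree ≤ 2 * m
  · exact (hEP p hd hpos).conv_EO hαβ
  have hdeg' : p.natDegree = 2 * m + 1 := by omega
  have hp0 : p ≠ 0 := by
    intro h
    rw [h, natDegree_zero] at hdeg'
    omega
  obtain ⟨r, hr⟩ := odd_root (p := p) (by rw [hdeg']; exact ⟨m, by ring⟩)
  obtain ⟨q, hq⟩ : (X - C r) ∣ p := dvd_iff_isRoot.2 hr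
  obtain ⟨hdq, hq0⟩ := deg_of_linfac hp0 hq
  rcases root_out hpos hr with hrα | hrβ
  · have hqpos : ∀ x ∈ Icc α β, 0 < q.eval x := by
      intro x hx
      have h1 := hpos x hx
      rw [hq, eval_mul, eval_sub, eval_X, eval_C] at h1
      have h2 : 0 < x - r := by linarith [hx.1]
      nlinarith
    have hE : InE α β m q := hEP q (by omega) hqpos
    have hsplit : p = (X - C α) * q + C (α - r) * q := by rw [hq, C_sub]; ring
    rw [hsplit]
    exact (hE.mulXα).add ((hE.smul (by linarith)).conv_EO hαβ)
  · have hqpos : ∀ x ∈ Icc α β, 0 < (-q).eval x := by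
      intro x hx
      have h1 := hpos x hx
      rw [hq, eval_mul, eval_sub, eval_X, eval_C] at h1
      rw [eval_neg]
      have h2 : x - r < 0 := by linarith [hx.2]
      nlinarith
    have hE : InE α β m (-q) := hEP (-q) (by rw [natDegree_neg]; omega) hqpos
    have hsplit : p = (C β - X) * (-q) + C (r - β) * (-q) := by rw [hq, C_sub]; ring
    rw [hsplit]
    exact (hE.mulβX).add ((hE.smul (by linarith)).conv_EO hαβ)

lemma EN_all (hαβ : α < β) (m : ℕ) (hEP : EP α β m)
    (ih : ∀ k, k + 1 = m → EN α β k ∧ ON α β k) : EN α β m := by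
  intro p hdeg hnn
  rcases eq_or_ne p 0 with rfl | hp0
  · exact InE.zero
  by_cases hroot : ∃ r ∈ Icc α β, p.eval r = 0
  · obtain ⟨r, hrI, hr0⟩ := hroot
    have hd1 : 0 < p.natDegree := by
      by_contra h
      push_neg at h
      have hc := p.eq_C_of_natDegree_le_zero (by omega)
      rw [hc, eval_C] at hr0
      exact hp0 (by rw [hc, hr0, C_0])
    obtain ⟨k, rfl⟩ : ∃ k, m = k + 1 := ⟨m - 1, by omega⟩
    obtain ⟨ihEN, ihON⟩ := ih k rfl
    rcases hrI.1.lt_or_eq with hαr | hαr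
    · rcases hrI.2.lt_or_eq with hrβ | hrβ
      · -- interior root
        obtain ⟨q, hq⟩ := double_root ⟨hαr, hrβ⟩ hnn hr0
        have hq0 : q ≠ 0 := by
          intro h
          rw [h, mul_zero] at hq
          exact hp0 hq
        have hdq : p.natDegree = 2 + q.natDegree := by
          rw [hq, natDegree_mul (pow_ne_zero 2 (X_sub_C_ne_zero r)) hq0, natDegree_pow,
            natDegree_X_sub_C]
        have haux : ∀ x ∈ Icc α β, x ≠ r → 0 ≤ q.eval x := by
          intro x hx hxr
          have h1 := hnn x hx
          rw [hq, eval_mul, eval_pow, eval_sub, eval_X, eval_C] at h1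
          have hxr' : x - r ≠ 0 := sub_ne_zero.2 hxr
          have h2 : 0 < (x - r) ^ 2 := by positivity
          nlinarith
        have hqnn : ∀ x ∈ Icc α β, 0 ≤ q.eval x := by
          intro x hx
          rcases eq_or_ne x r with rfl | hxr
          · exact ext_nonneg hαβ hx haux
          · exact haux x hx hxr
        have hE : InE α β k q := ihEN q (by omega) hqnn
        rw [hq]
        exact hE.sq_mul (natDegree_X_sub_C r).le
      · -- r = β
        rw [hrβ] at hr0
        obtain ⟨q, hq⟩ : (X - C β) ∣ p := dvd_iff_isRoot.2 hr0
        obtain ⟨hdq, hq0⟩ := deg_of_linfac hp0 hq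
        have haux : ∀ x ∈ Icc α β, x ≠ β → 0 ≤ (-q).eval x := by
          intro x hx hxr
          have h1 := hnn x hx
          rw [hq, eval_mul, eval_sub, eval_X, eval_C] at h1
          rw [eval_neg]
          have h2 : x - β < 0 := lt_of_le_of_ne (by linarith [hx.2]) (sub_ne_zero.2 hxr)
          nlinarith
        have hqnn : ∀ x ∈ Icc α β, 0 ≤ (-q).eval x := by
          intro x hx
          rcases eq_or_ne x β with rfl | hxr
          · exact ext_nonneg hαβ hx haux
          · exact haux x hx hxr
        have hO : InO α β k (-q) := ihON (-q) (by rw [natDegree_neg]; omega) hqnn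
        have hsplit : p = (C β - X) * (-q) := by rw [hq]; ring
        rw [hsplit]
        exact hO.mulβX
    · -- r = α
      rw [← hαr] at hr0
      obtain ⟨q, hq⟩ : (X - C α) ∣ p := dvd_iff_isRoot.2 hr0
      obtain ⟨hdq, hq0⟩ := deg_of_linfac hp0 hq
      have haux : ∀ x ∈ Icc α β, x ≠ α → 0 ≤ q.eval x := by
        intro x hx hxr
        have h1 := hnn x hx
        rw [hq, eval_mul, eval_sub, eval_X, eval_C] at h1
        have h2 : 0 < x - α := lt_of_le_of_ne (by linarith [hx.1]) (fun h => hxr (by linarith [h]))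
        nlinarith
      have hqnn : ∀ x ∈ Icc α β, 0 ≤ q.eval x := by
        intro x hx
        rcases eq_or_ne x α with rfl | hxr
        · exact ext_nonneg hαβ hx haux
        · exact haux x hx hxr
      have hO : InO α β k q := ihON q (by omega) hqnn
      rw [hq]
      exact hO.mulXα
  · push_neg at hroot
    exact hEP p hdeg fun x hx => lt_of_le_of_ne (hnn x hx) (Ne.symm (hroot x hx))

lemma ON_all (hαβ : α < β) (m : ℕ) (hEN : EN α β m) (hOP : OP α β m)
    (ih : ∀ k, k + 1 = m → ON α β k) : ON α β m := by
  intro p hdeg hnn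
  rcases eq_or_ne p 0 with rfl | hp0
  · exact InO.zero
  by_cases hroot : ∃ r ∈ Icc α β, p.eval r = 0
  · obtain ⟨r, hrI, hr0⟩ := hroot
    rcases hrI.1.lt_or_eq with hαr | hαr
    · rcases hrI.2.lt_or_eq with hrβ | hrβ
      · -- interior root
        obtain ⟨q, hq⟩ := double_root ⟨hαr, hrβ⟩ hnn hr0
        have hq0 : q ≠ 0 := by
          intro h
          rw [h, mul_zero] at hq
          exact hp0 hq
        have hdq : p.natDegree = 2 + q.natDegree := by
          rw [hq, natDegree_mul (pow_ne_zero 2 (X_sub_C_ne_zero r)) hq0, natDegree_pow,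
            natDegree_X_sub_C]
        obtain ⟨k, rfl⟩ : ∃ k, m = k + 1 := ⟨m - 1, by omega⟩
        have haux : ∀ x ∈ Icc α β, x ≠ r → 0 ≤ q.eval x := by
          intro x hx hxr
          have h1 := hnn x hx
          rw [hq, eval_mul, eval_pow, eval_sub, eval_X, eval_C] at h1
          have hxr' : x - r ≠ 0 := sub_ne_zero.2 hxr
          have h2 : 0 < (x - r) ^ 2 := by positivity
          nlinarith
        have hqnn : ∀ x ∈ Icc α β, 0 ≤ q.eval x := by
          intro x hx
          rcases eq_or_ne x r with rfl | hxr
          · exact ext_nonneg hαβ hx haux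
          · exact haux x hx hxr
        have hO : InO α β k q := ih k rfl q (by omega) hqnn
        rw [hq]
        exact hO.sq_mul (natDegree_X_sub_C r).le
      · -- r = β
        rw [hrβ] at hr0
        obtain ⟨q, hq⟩ : (X - C β) ∣ p := dvd_iff_isRoot.2 hr0
        obtain ⟨hdq, hq0⟩ := deg_of_linfac hp0 hq
        have haux : ∀ x ∈ Icc α β, x ≠ β → 0 ≤ (-q).eval x := by
          intro x hx hxr
          have h1 := hnn x hx
          rw [hq, eval_mul, eval_sub, eval_X, eval_C] at h1
          rw [eval_neg]
          have h2 : x - β < 0 := lt_of_le_of_ne (by linarith [hx.2]) (sub_ne_zero.2 hxr)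
          nlinarith
        have hqnn : ∀ x ∈ Icc α β, 0 ≤ (-q).eval x := by
          intro x hx
          rcases eq_or_ne x β with rfl | hxr
          · exact ext_nonneg hαβ hx haux
          · exact haux x hx hxr
        have hE : InE α β m (-q) := hEN (-q) (by rw [natDegree_neg]; omega) hqnn
        have hsplit : p = (C β - X) * (-q) := by rw [hq]; ring
        rw [hsplit]
        exact hE.mulβX
    · -- r = α
      rw [← hαr] at hr0
      obtain ⟨q, hq⟩ : (X - C α) ∣ p := dvd_iff_isRoot.2 hr0
      obtain ⟨hdq, hq0⟩ := deg_of_linfac hp0 hq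
      have haux : ∀ x ∈ Icc α β, x ≠ α → 0 ≤ q.eval x := by
        intro x hx hxr
        have h1 := hnn x hx
        rw [hq, eval_mul, eval_sub, eval_X, eval_C] at h1
        have h2 : 0 < x - α := lt_of_le_of_ne (by linarith [hx.1]) (fun h => hxr (by linarith [h]))
        nlinarith
      have hqnn : ∀ x ∈ Icc α β, 0 ≤ q.eval x := by
        intro x hx
        rcases eq_or_ne x α with rfl | hxr
        · exact ext_nonneg hαβ hx haux
        · exact haux x hx hxr
      have hE : InE α β m q := hEN q (by omega) hqnn
      rw [hq]
      exact hE.mulXα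
  · push_neg at hroot
    exact hOP p hdeg fun x hx => lt_of_le_of_ne (hnn x hx) (Ne.symm (hroot x hx))

lemma quad (hαβ : α < β) (m : ℕ) : EP α β m ∧ OP α β m ∧ EN α β m ∧ ON α β m := by
  induction m with
  | zero =>
    have hEP := EP_all hαβ 0 (fun k hk => absurd hk k.succ_ne_zero)
    have hOP := OP_of hαβ 0 hEP
    have hEN := EN_all hαβ 0 hEP (fun k hk => absurd hk k.succ_ne_zero)
    have hON := ON_all hαβ 0 hEN hOP (fun k hk => absurd hk k.succ_ne_zero)
    exact ⟨hEP, hOP, hEN, hON⟩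
  | succ k ihk =>
    obtain ⟨ihEP, ihOP, ihEN, ihON⟩ := ihk
    have hEP := EP_all hαβ (k + 1)
      (fun k' hk' => by
        obtain rfl : k' = k := Nat.succ_injective hk'
        exact ⟨ihEP, ihOP⟩)
    have hOP := OP_of hαβ (k + 1) hEP
    have hEN := EN_all hαβ (k + 1) hEP
      (fun k' hk' => by
        obtain rfl : k' = k := Nat.succ_injective hk'
        exact ⟨ihEN, ihON⟩)
    have hON := ON_all hαβ (k + 1) hEN hOP
      (fun k' hk' => by
        obtain rfl : k' = k := Nat.succ_injective hk'
        exact ihON)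
    exact ⟨hEP, hOP, hEN, hON⟩


end ML

theorem markov_lukacs_even
    (α β : ℝ) (hαβ : α < β) (n : ℕ) (p : Polynomial ℝ)
    (hdeg : p.natDegree = 2 * n)
    (hpos : ∀ x ∈ Set.Icc α β, 0 ≤ p.eval x) :
    ∃ s t : Polynomial ℝ, IsSumOfSquaresOfDeg n s ∧ IsSumOfSquaresOfDeg (n - 1) t ∧
      p = s + (Polynomial.X - Polynomial.C α) * (Polynomial.C β - Polynomial.X) * t := by
  obtain ⟨s, t, hs, ht, _, heq⟩ := (ML.quad hαβ n).2.2.1 p (le_of_eq hdeg) hpos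
  exact ⟨s, t, hs, ht, heq⟩
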